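/- With the setup of two commuting squares Q ∘ φ = ψ ∘ P, if P̃(u; z) = P(u) + Σ zk·wk is surjective, φ restricts to an isomorphism ker P → ker Q, and ψ induces an isomorphism coker P → coker Q, then the operator Q̃(v; z) = Q(v) + Σ zk·ψ(wk) from H2 ⊕ ℂ^l to H2' is surjective. -/

import Mathlib

/-- The augmented operator `P̃(u; z) = P u + ∑ zₖ • wₖ` on `H1 ⊕ ℂˡ`. -/
noncomputable def augmentedOp {H H' : Type*}
    [NormedAddCommGroup H] [InnerProductSpace ℂ H]
    [NormedAddCommGroup H'] [InnerProductSpace ℂ H'] {l : ℕ}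
    (P : H →L[ℂ] H') (w : Fin l → H') : (H × (Fin l → ℂ)) →ₗ[ℂ] H' :=
  (P : H →ₗ[ℂ] H') ∘ₗ LinearMap.fst ℂ H (Fin l → ℂ) +
    (Fintype.linearCombination ℂ w) ∘ₗ LinearMap.snd ℂ H (Fin l → ℂ)

/-- If the square `Q ∘ φ = ψ ∘ P` commutes, `P̃` is surjective and the induced maps
on kernels and cokernels are isomorphisms, then
`Q̃(v; z) = Q v + ∑ zₖ • ψ(wₖ)` is surjective. -/
theorem stmt3
    {H1 H1' H2 H2' : Type*}
    [NormedAddCommGroup H1] [InnerProductSpace ℂ H1] [CompleteSpace H1]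
    [NormedAddCommGroup H1'] [InnerProductSpace ℂ H1'] [CompleteSpace H1']
    [NormedAddCommGroup H2] [InnerProductSpace ℂ H2] [CompleteSpace H2]
    [NormedAddCommGroup H2'] [InnerProductSpace ℂ H2'] [CompleteSpace H2']
    (P : H1 →L[ℂ] H1') (Q : H2 →L[ℂ] H2')
    (φ : H1 →L[ℂ] H2) (ψ : H1' →L[ℂ] H2')
    -- P and Q are Fredholm:
    [FiniteDimensional ℂ (LinearMap.ker (P : H1 →ₗ[ℂ] H1'))]
    [FiniteDimensional ℂ (H1' ⧸ LinearMap.range (P : H1 →ₗ[ℂ] H1'))]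
    [FiniteDimensional ℂ (LinearMap.ker (Q : H2 →ₗ[ℂ] H2'))]
    [FiniteDimensional ℂ (H2' ⧸ LinearMap.range (Q : H2 →ₗ[ℂ] H2'))]
    (hcomm : ∀ u : H1, Q (φ u) = ψ (P u))
    (hker : ∀ u ∈ LinearMap.ker (P : H1 →ₗ[ℂ] H1'),
      (φ : H1 →ₗ[ℂ] H2) u ∈ LinearMap.ker (Q : H2 →ₗ[ℂ] H2'))
    (hcoker : LinearMap.range (P : H1 →ₗ[ℂ] H1') ≤
      LinearMap.ker ((LinearMap.range (Q : H2 →ₗ[ℂ] H2')).mkQ ∘ₗ (ψ : H1' →ₗ[ℂ] H2')))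
    (hker_iso : Function.Bijective ((φ : H1 →ₗ[ℂ] H2).restrict hker))
    (hcoker_iso : Function.Bijective
      (Submodule.liftQ (LinearMap.range (P : H1 →ₗ[ℂ] H1'))
        ((LinearMap.range (Q : H2 →ₗ[ℂ] H2')).mkQ ∘ₗ (ψ : H1' →ₗ[ℂ] H2')) hcoker))
    {l : ℕ} (w : Fin l → H1')
    (hPt : Function.Surjective (augmentedOp P w)) :
    Function.Surjective (augmentedOp Q (fun k => ψ (w k))) := by
  intro y
  obtain ⟨xbar, hx⟩ := hcoker_iso.2 ((LinearMap.range (Q : H2 →ₗ[ℂ] H2')).mkQ y)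
  obtain ⟨x, rfl⟩ := Submodule.mkQ_surjective _ xbar
  have h2 : ψ x - y ∈ LinearMap.range (Q : H2 →ₗ[ℂ] H2') := by
    have hx' : Submodule.Quotient.mk (ψ x)
        = (Submodule.Quotient.mk y : H2' ⧸ LinearMap.range (Q : H2 →ₗ[ℂ] H2')) := by
      simpa using hx
    exact (Submodule.Quotient.eq _).mp hx'
  obtain ⟨v, hv⟩ := h2
  obtain ⟨⟨u, z⟩, hu⟩ := hPt x
  refine ⟨(φ u - v, z), ?_⟩
  simp only [augmentedOp, LinearMap.add_apply, LinearMap.comp_apply,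
    LinearMap.fst_apply, LinearMap.snd_apply, ContinuousLinearMap.coe_coe] at hu ⊢
  have hlc : Fintype.linearCombination ℂ (fun k => ψ (w k)) z
      = ψ (Fintype.linearCombination ℂ w z) := by
    simp [Fintype.linearCombination_apply, map_sum, map_smul]
  rw [hlc, map_sub, hcomm u, show Q v = ψ x - y from hv]
  rw [← hu, map_add]
  abel
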